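/- There exists a (Π,ℛ)-automaton running on finite SB(Π)-models that halts on every finite pointed SB(Π)-model but is strongly nonlocal: no automaton specifying a local algorithm accepts exactly the same finite pointed SB(Π)-models. -/

import Mathlib

/-- Formulae of modal logic ML(Π,ℛ): `P` indexes unary predicate symbols,
`R` indexes binary relation symbols (modalities). -/
inductive MF (P R : Type) : Type
  | top : MF P R
  | atom : P → MF P R
  | neg : MF P R → MF P R
  | and : MF P R → MF P R → MF P R
  | dia : R → MF P R → MF P R

/-- A (Π,ℛ)-Kripke model with domain `W`. -/
structure KModel (P R W : Type) where
  val : P → W → Prop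
  rel : R → W → W → Prop

/-- Satisfaction for modal logic. -/
def msat {P R W : Type} (M : KModel P R W) : W → MF P R → Prop
  | _, .top => True
  | w, .atom p => M.val p w
  | w, .neg φ => ¬ msat M w φ
  | w, .and φ ψ => msat M w φ ∧ msat M w ψ
  | w, .dia r φ => ∃ v, M.rel r w v ∧ msat M v φ

/-- Abstract representation of (Π,ℛ,n)-types: a depth-0 type records the set of
unary predicates holding at a point; a depth-(n+1) type records a depth-n type
together with, for each modality, the set of depth-n types realized at successors. -/
def TypeN (P R : Type) : ℕ → Type
  | 0 => Set P
  | n+1 => TypeN P R n × (R → Set (TypeN P R n))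

/-- A pointed model `(M,w)` satisfies the (Π,ℛ,n)-type `τ`. -/
def satT {P R W : Type} (M : KModel P R W) : (n : ℕ) → W → TypeN P R n → Prop
  | 0, w, τ => ∀ p, M.val p w ↔ τ p
  | n+1, w, τ => satT M n w τ.1 ∧
      ∀ r σ, ((∃ v, M.rel r w v ∧ satT M n v σ) ↔ τ.2 r σ)

/-- The (Π,ℛ,n)-type of a pointed model `(M,w)`. -/
def typeOf {P R W : Type} (M : KModel P R W) : (n : ℕ) → W → TypeN P R n
  | 0, w => fun p => M.val p w
  | n+1, w => ⟨typeOf M n w, fun r σ => ∃ v, M.rel r w v ∧ typeOf M n v = σ⟩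

/-- A synchronized message passing (Π,ℛ)-automaton with states `Q` and messages `Msg`. -/
structure MPA (P R Q Msg : Type) where
  init : Set P → Q
  trans : (R → Set Msg) → Q → Q
  msgf : Q → R → Msg
  accept : Set Q
  reject : Set Q

/-- The state of automaton `A` at node `w` of model `M` in round `n`. -/
def MPA.run {P R W Q Msg : Type} (A : MPA P R Q Msg) (M : KModel P R W) : ℕ → W → Q
  | 0, w => A.init {p | M.val p w}
  | n+1, w =>
      A.trans (fun r => {m | ∃ v, M.rel r w v ∧ m = A.msgf (A.run M n v) r}) (A.run M n w)

/-- `A` accepts `(M,w)` in round `n`. -/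
def MPA.acceptsAt {P R W Q Msg : Type} (A : MPA P R Q Msg) (M : KModel P R W)
    (w : W) (n : ℕ) : Prop :=
  A.run M n w ∈ A.accept ∧ ∀ m < n, A.run M m w ∉ A.reject

/-- `A` rejects `(M,w)` in round `n`. -/
def MPA.rejectsAt {P R W Q Msg : Type} (A : MPA P R Q Msg) (M : KModel P R W)
    (w : W) (n : ℕ) : Prop :=
  A.run M n w ∈ A.reject ∧ ∀ m < n, A.run M m w ∉ A.accept

/-- `A` accepts the pointed model `(M,w)`. -/
def MPA.accepts {P R W Q Msg : Type} (A : MPA P R Q Msg) (M : KModel P R W) (w : W) : Prop :=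
  ∃ n, A.acceptsAt M w n

/-- `A` rejects the pointed model `(M,w)`. -/
def MPA.rejects {P R W Q Msg : Type} (A : MPA P R Q Msg) (M : KModel P R W) (w : W) : Prop :=
  ∃ n, A.rejectsAt M w n

/-- Formulae of first-order logic FO(Π,ℛ) with variables indexed by ℕ. -/
inductive FO (P R : Type) : Type
  | top : FO P R
  | eq : ℕ → ℕ → FO P R
  | atom : P → ℕ → FO P R
  | rel : R → ℕ → ℕ → FO P R
  | neg : FO P R → FO P R
  | and : FO P R → FO P R → FO P R
  | ex : ℕ → FO P R → FO P R

/-- First-order satisfaction under an assignment `f`. -/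
def fsat {P R W : Type} (M : KModel P R W) : (ℕ → W) → FO P R → Prop
  | _, .top => True
  | f, .eq x y => f x = f y
  | f, .atom p x => M.val p (f x)
  | f, .rel r x y => M.rel r (f x) (f y)
  | f, .neg φ => ¬ fsat M f φ
  | f, .and φ ψ => fsat M f φ ∧ fsat M f ψ
  | f, .ex x φ => ∃ v, fsat M (Function.update f x v) φ

/-- An SB(Π)-model over Π = {P₀,P₁,Q₁,Q₂,Q₃} (indexed by `Fin 5` as 0,1,2,3,4):
a Kripke model with a single symmetric irreflexive relation. -/
def IsSB {W : Type} (M : KModel (Fin 5) Unit W) : Prop :=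
  (∀ u v, M.rel () u v → M.rel () v u) ∧ (∀ u, ¬ M.rel () u u)

/-- An automaton halts on a pointed model: it accepts or rejects it, and once its
state at the point is an accepting or rejecting state it stays fixed forever. -/
def MPA.haltsOn {P R W Q Msg : Type} (A : MPA P R Q Msg) (M : KModel P R W) (w : W) : Prop :=
  (A.accepts M w ∨ A.rejects M w) ∧
  ∀ n m, n ≤ m → A.run M n w ∈ A.accept ∪ A.reject → A.run M m w = A.run M n w



def tm (n : ℕ) : Bool :=
  if h : n = 0 then false else xor (n % 2 == 1) (tm (n / 2))
decreasing_by exact Nat.div_lt_self (Nat.pos_of_ne_zero h) one_lt_two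

lemma tm_zero : tm 0 = false := by simp [tm]

lemma tm_two_mul (n : ℕ) : tm (2 * n) = tm n := by
  rcases Nat.eq_zero_or_pos n with h | h
  · simp [h]
  · rw [tm]
    have h1 : 2 * n ≠ 0 := by omega
    have h2 : 2 * n % 2 = 0 := by omega
    have h3 : 2 * n / 2 = n := by omega
    simp [h1, h2, h3]

lemma tm_two_mul_add_one (n : ℕ) : tm (2 * n + 1) = !(tm n) := by
  rw [tm]
  have h2 : (2 * n + 1) % 2 = 1 := by omega
  have h3 : (2 * n + 1) / 2 = n := by omega
  simp [h2, h3, Bool.xor_comm]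

lemma tm_pair_odd {k : ℕ} (h : tm k = tm (k + 1)) : k % 2 = 1 := by
  by_contra hk
  have : k % 2 = 0 := by omega
  obtain ⟨a, rfl⟩ : ∃ a, k = 2 * a := ⟨k / 2, by omega⟩
  rw [tm_two_mul, tm_two_mul_add_one] at h
  simp at h

theorem tm_no_overlap : ∀ p, 0 < p → ∀ s, ¬ (∀ m ≤ p, tm (s + m) = tm (s + m + p)) := by
  intro p
  induction p using Nat.strong_induction_on with
  | _ p IH =>
    intro hp s H
    rcases Nat.even_or_odd p with ⟨q, hq⟩ | hodd
    · -- even case : reduce to q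
      have hq1 : 0 < q := by omega
      rcases Nat.even_or_odd s with ⟨a, ha⟩ | ⟨a, ha⟩
      · refine IH q (by omega) hq1 a ?_
        intro m hm
        have h1 := H (2 * m) (by omega)
        have e2 : s + 2 * m = 2 * (a + m) := by omega
        have e3 : s + 2 * m + p = 2 * (a + m + q) := by omega
        rw [e3, tm_two_mul, e2, tm_two_mul] at h1
        exact h1
      · refine IH q (by omega) hq1 a ?_
        intro m hm
        have h1 := H (2 * m) (by omega)
        have e2 : s + 2 * m = 2 * (a + m) + 1 := by omega
        have e3 : s + 2 * m + p = 2 * (a + m + q) + 1 := by omega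
        rw [e3, tm_two_mul_add_one, e2, tm_two_mul_add_one] at h1
        simpa using h1
    · -- odd case
      by_cases hex : ∃ m, m + 1 ≤ p ∧ tm (s + m) = tm (s + m + 1)
      · obtain ⟨m, hm, heq⟩ := hex
        have h1 : (s + m) % 2 = 1 := tm_pair_odd heq
        have heq2 : tm (s + m + p) = tm (s + m + p + 1) := by
          have a1 := H m (by omega)
          have a2 := H (m + 1) (by omega)
          have e1 : s + m + p + 1 = s + (m + 1) + p := by ring
          have e2 : s + (m + 1) = s + m + 1 := by ring
          rw [e1, ← a2, e2, ← heq, a1]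
        have h2 : (s + m + p) % 2 = 1 := tm_pair_odd heq2
        obtain ⟨c, hc⟩ := hodd
        omega
      · push_neg at hex
        have alt : ∀ m ≤ p, tm (s + m) = xor (decide (m % 2 = 1)) (tm s) := by
          intro m
          induction m with
          | zero => intro _; simp
          | succ k ihk =>
            intro hk
            have h1 := ihk (by omega)
            have hne := hex k (by omega)
            have e : s + k + 1 = s + (k + 1) := by ring
            rw [e] at hne
            rcases Nat.even_or_odd k with ⟨c, hc⟩ | ⟨c, hc⟩
            · have e0 : k % 2 = 0 := by omega
              have e1 : (k+1) % 2 = 1 := by omega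
              simp only [e0] at h1
              simp only [e1]
              simp only [decide_eq_true_eq, Nat.zero_ne_one, decide_eq_false_iff_not] at h1 ⊢
              simp at h1
              rw [h1] at hne
              simp only [decide_true, Bool.true_xor]
              rw [Bool.eq_not_iff]
              exact fun hcon => hne hcon.symm
            · have e0 : k % 2 = 1 := by omega
              have e1 : (k+1) % 2 = 0 := by omega
              simp only [e0, decide_true, Bool.true_xor] at h1
              simp only [e1]
              rw [h1] at hne
              have : tm (s + (k+1)) = !!(tm s) := by
                rw [Bool.eq_not_iff]; exact fun hcon => hne hcon.symm
              simpa using this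
        have h0 := H 0 (by omega)
        have hpalt := alt p (le_refl p)
        obtain ⟨c, hc⟩ := hodd
        have e1 : p % 2 = 1 := by omega
        simp only [e1, decide_true, Bool.true_xor] at hpalt
        simp only [Nat.add_zero] at h0
        rw [h0] at hpalt
        exact (Bool.eq_not_self _).mp hpalt

open Fin.NatCast

-- ## Letters
abbrev Letter := Set (Fin 5)
abbrev Strm := List (Set Letter)

open Classical in
noncomputable def qlab (ℓ : Letter) : Fin 3 :=
  if (2:Fin 5) ∈ ℓ then 0 else if (3:Fin 5) ∈ ℓ then 1 else 2

def qcode : Fin 3 → Fin 5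
  | 0 => 2
  | 1 => 3
  | 2 => 4

def F (i : ℕ) : Letter := {x | (x = 0 ∧ tm i = true) ∨ x = qcode (i : Fin 3)}

lemma qcode_ne_zero (c : Fin 3) : (0:Fin 5) ≠ qcode c := by fin_cases c <;> decide

lemma mem_F_zero (i : ℕ) : (0:Fin 5) ∈ F i ↔ tm i = true := by
  simp only [F, Set.mem_setOf_eq]
  constructor
  · rintro (⟨_, h⟩ | h)
    · exact h
    · exact absurd h (qcode_ne_zero _)
  · intro h; left; exact ⟨by trivial, h⟩

lemma qlab_F (i : ℕ) : qlab (F i) = (i : Fin 3) := by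
  have key : ∀ (c : Fin 3) (b : Bool),
      qlab {x | (x = 0 ∧ b = true) ∨ x = qcode c} = c := by
    intro c b
    have n20 : ¬((2:Fin 5) = 0) := by decide
    have n30 : ¬((3:Fin 5) = 0) := by decide
    fin_cases c
    · show qlab {x : Fin 5 | (x = 0 ∧ b = true) ∨ x = qcode 0} = 0
      have h2 : (2:Fin 5) ∈ {x : Fin 5 | (x = 0 ∧ b = true) ∨ x = qcode 0} := by
        right; rfl
      simp only [qlab, if_pos h2]
    · show qlab {x : Fin 5 | (x = 0 ∧ b = true) ∨ x = qcode 1} = 1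
      have h2 : (2:Fin 5) ∉ {x : Fin 5 | (x = 0 ∧ b = true) ∨ x = qcode 1} := by
        rintro (⟨h,_⟩|h) <;> revert h <;> decide
      have h3 : (3:Fin 5) ∈ {x : Fin 5 | (x = 0 ∧ b = true) ∨ x = qcode 1} := by
        right; rfl
      simp only [qlab, if_neg h2, if_pos h3]
    · show qlab {x : Fin 5 | (x = 0 ∧ b = true) ∨ x = qcode 2} = 2
      have h2 : (2:Fin 5) ∉ {x : Fin 5 | (x = 0 ∧ b = true) ∨ x = qcode 2} := by
        rintro (⟨h,_⟩|h) <;> revert h <;> decide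
      have h3 : (3:Fin 5) ∉ {x : Fin 5 | (x = 0 ∧ b = true) ∨ x = qcode 2} := by
        rintro (⟨h,_⟩|h) <;> revert h <;> decide
      simp only [qlab, if_neg h2, if_neg h3]
  exact key (i : Fin 3) (tm i)

lemma F_eq_tm {i j : ℕ} (h : F i = F j) : tm i = tm j := by
  have h0 := mem_F_zero i
  rw [h, mem_F_zero] at h0
  have h1 := mem_F_zero j
  cases hi : tm i <;> cases hj : tm j <;> simp_all

lemma singF_ne_empty (i : ℕ) : ({F i} : Set Letter) ≠ ∅ := by
  intro h
  have : F i ∈ ({F i} : Set Letter) := rfl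
  rw [h] at this; exact this

lemma singF_ne_univ (i : ℕ) : ({F i} : Set Letter) ≠ Set.univ := by
  intro h
  have h1 : (∅ : Letter) ∈ ({F i} : Set Letter) := by rw [h]; trivial
  have h2 : (Set.univ : Letter) ∈ ({F i} : Set Letter) := by rw [h]; trivial
  have : (∅ : Letter) = Set.univ := by
    rw [Set.mem_singleton_iff] at h1 h2; rw [h1, h2]
  have : (0 : Fin 5) ∈ (∅ : Letter) := by rw [this]; trivial
  exact this

-- ## The automaton
def lab {W : Type} (M : KModel (Fin 5) Unit W) (w : W) : Letter := {p | M.val p w}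

def lastE (s : Strm) : Set Letter := s.getD (s.length - 1) ∅

def relMsg (q s : Strm) : Prop :=
  ∃ a ∈ q.getD 0 ∅, ∃ b ∈ s.getD 0 ∅, qlab b = qlab a + 1

open Classical in
noncomputable def newE (MS : Set Strm) (q : Strm) : Set Letter :=
  if ∃ s ∈ MS, relMsg q s ∧ s.length ≠ q.length then Set.univ
  else ⋃ s ∈ {s ∈ MS | relMsg q s}, lastE s

def goodS (q : Strm) : Prop := ∃ s, ∀ m < q.length, q.getD m ∅ = {F (s+m)}

open Classical in
noncomputable def AA : MPA (Fin 5) Unit Strm Strm where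
  init ℓ := [{ℓ}]
  trans msgs q := if goodS q then q ++ [newE (msgs ()) q] else q
  msgf q _ := q
  accept := {q | ¬ goodS q ∧ Even (q.length - 1)}
  reject := {q | ¬ goodS q ∧ ¬ Even (q.length - 1)}

def MSet {W : Type} (M : KModel (Fin 5) Unit W) (w : W) (t : ℕ) : Set Strm :=
  {m | ∃ v, M.rel () w v ∧ m = AA.run M t v}

variable {W : Type} {M : KModel (Fin 5) Unit W}

lemma run_zero (w : W) : AA.run M 0 w = [{lab M w}] := rfl

open Classical in
lemma run_succ (w : W) (t : ℕ) :
    AA.run M (t+1) w = if goodS (AA.run M t w)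
      then AA.run M t w ++ [newE (MSet M w t) (AA.run M t w)]
      else AA.run M t w := rfl

lemma run_length_pos (w : W) (t : ℕ) : 0 < (AA.run M t w).length := by
  induction t with
  | zero => simp [run_zero]
  | succ t ih =>
    rw [run_succ]
    split
    · simp
    · exact ih

lemma run_length_le (w : W) (t : ℕ) : (AA.run M t w).length ≤ t + 1 := by
  induction t with
  | zero => simp [run_zero]
  | succ t ih =>
    rw [run_succ]
    split
    · simp; omega
    · omega

lemma run_len_of_NF {w : W} {t : ℕ} (h : ∀ t' < t, goodS (AA.run M t' w)) :
    (AA.run M t w).length = t + 1 := by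
  induction t with
  | zero => simp [run_zero]
  | succ t ih =>
    rw [run_succ, if_pos (h t (by omega))]
    simp [ih (fun t' ht' => h t' (by omega))]

lemma NF_of_run_len {w : W} {t : ℕ} (h : (AA.run M t w).length = t + 1) :
    ∀ t' < t, goodS (AA.run M t' w) := by
  induction t with
  | zero => omega
  | succ t ih =>
    intro t' ht'
    rw [run_succ] at h
    by_cases hg : goodS (AA.run M t w)
    · rw [if_pos hg] at h
      simp at h
      rcases Nat.lt_succ_iff_lt_or_eq.mp ht' with h' | h'
      · exact ih h t' h'
      · rw [h']; exact hg
    · rw [if_neg hg] at h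
      have := run_length_le (M := M) w t
      omega

lemma run_fix {w : W} {n : ℕ} (h : ¬ goodS (AA.run M n w)) :
    ∀ m, n ≤ m → AA.run M m w = AA.run M n w := by
  intro m hm
  obtain ⟨k, rfl⟩ := Nat.exists_eq_add_of_le hm
  induction k with
  | zero => rfl
  | succ k ih =>
    have e : n + (k+1) = (n+k) + 1 := rfl
    rw [e, run_succ, ih (by omega), if_neg h]

lemma run_head (w : W) (t : ℕ) : (AA.run M t w).getD 0 ∅ = {lab M w} := by
  induction t with
  | zero => rfl
  | succ t ih =>
    rw [run_succ]
    split
    · rw [List.getD_append _ _ _ _ (run_length_pos w t)]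
      exact ih
    · exact ih

-- ## Pure dynamics
def stepS (M : KModel (Fin 5) Unit W) (S : Set W) : Set W :=
  {v | ∃ u ∈ S, M.rel () u v ∧ qlab (lab M v) = qlab (lab M u) + 1}

def SW (M : KModel (Fin 5) Unit W) (w : W) : ℕ → Set W
  | 0 => {w}
  | t+1 => stepS M (SW M w t)

noncomputable def pureS (M : KModel (Fin 5) Unit W) (w : W) (t : ℕ) : Strm :=
  (List.range (t+1)).map (fun m => lab M '' SW M w m)

lemma getD_range_map (f : ℕ → Set Letter) (t m : ℕ) (h : m < t + 1) :
    ((List.range (t+1)).map f).getD m ∅ = f m := by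
  rw [List.getD_eq_getElem _ _ (by simpa using h)]
  simp

lemma pureS_getD {w : W} {t m : ℕ} (h : m < t + 1) :
    (pureS M w t).getD m ∅ = lab M '' SW M w m := getD_range_map _ t m h

lemma pureS_length (w : W) (t : ℕ) : (pureS M w t).length = t + 1 := by
  simp [pureS]

lemma pureS_succ (w : W) (t : ℕ) :
    pureS M w (t+1) = pureS M w t ++ [lab M '' SW M w (t+1)] := by
  unfold pureS
  rw [List.range_succ]
  simp

lemma lastE_append (q : Strm) (x : Set Letter) : lastE (q ++ [x]) = x := by
  unfold lastE
  simp only [List.length_append, List.length_singleton]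
  rw [List.getD_append_right _ _ _ _ (by omega)]
  simp

lemma getD_append_lt (q : Strm) (x : Set Letter) {m : ℕ} (h : m < q.length) :
    (q ++ [x]).getD m ∅ = q.getD m ∅ := List.getD_append _ _ _ _ h

lemma not_goodS_of_last_univ {q : Strm} (h : lastE q = Set.univ) : ¬ goodS q := by
  rintro ⟨s, hs⟩
  have hq : q ≠ [] := by
    intro h0
    rw [h0] at h
    have : (∅ : Letter) ∈ (Set.univ : Set Letter) := trivial
    rw [← h] at this
    simp [lastE] at this
  have hlen : 0 < q.length := List.length_pos_iff.mpr hq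
  have := hs (q.length - 1) (by omega)
  rw [← lastE, h] at this
  exact singF_ne_univ _ this.symm

lemma not_goodS_of_last_empty {q : Strm} (hq : q ≠ []) (h : lastE q = ∅) : ¬ goodS q := by
  rintro ⟨s, hs⟩
  have hlen : 0 < q.length := List.length_pos_iff.mpr hq
  have := hs (q.length - 1) (by omega)
  rw [← lastE, h] at this
  exact singF_ne_empty _ this.symm

-- neighbours realizing the successor condition
def nbrS (M : KModel (Fin 5) Unit W) (v : W) : Set W :=
  {u | M.rel () v u ∧ qlab (lab M u) = qlab (lab M v) + 1}

lemma stepS_iUnion {ι : Type} (I : Set ι) (f : ι → Set W) :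
    stepS M (⋃ i ∈ I, f i) = ⋃ i ∈ I, stepS M (f i) := by
  ext x
  constructor
  · rintro ⟨u, hu, hr⟩
    rw [Set.mem_iUnion₂] at hu
    obtain ⟨i, hi, hui⟩ := hu
    rw [Set.mem_iUnion₂]
    exact ⟨i, hi, u, hui, hr⟩
  · intro hx
    rw [Set.mem_iUnion₂] at hx
    obtain ⟨i, hi, u, hui, hr⟩ := hx
    refine ⟨u, ?_, hr⟩
    rw [Set.mem_iUnion₂]
    exact ⟨i, hi, hui⟩

lemma SW_succ_union (v : W) (t : ℕ) :
    SW M v (t+1) = ⋃ u ∈ nbrS M v, SW M u t := by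
  induction t with
  | zero =>
    show stepS M {v} = _
    ext x
    rw [Set.mem_iUnion₂]
    constructor
    · rintro ⟨u, hu, hr, hq⟩
      rw [Set.mem_singleton_iff] at hu
      subst hu
      exact ⟨x, ⟨hr, hq⟩, rfl⟩
    · rintro ⟨u, ⟨hr, hq⟩, hx⟩
      have hx' : x = u := hx
      subst hx'
      exact ⟨v, rfl, hr, hq⟩
  | succ t ih =>
    show stepS M (SW M v (t+1)) = _
    rw [ih, stepS_iUnion]
    rfl

lemma pureS_zero (v : W) : pureS M v 0 = [{lab M v}] := by
  unfold pureS
  rw [show List.range 1 = [0] from rfl]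
  simp [SW]

lemma pureS_getD_zero (v : W) (t : ℕ) : (pureS M v t).getD 0 ∅ = {lab M v} := by
  rw [pureS_getD (by omega)]
  show lab M '' SW M v 0 = _
  simp [SW]

lemma run_pure_or_univ :
    ∀ (t : ℕ) (v : W), (AA.run M t v).length = t + 1 →
      AA.run M t v = pureS M v t ∨ lastE (AA.run M t v) = Set.univ := by
  intro t
  induction t with
  | zero =>
    intro v _
    left
    rw [run_zero, pureS_zero]
  | succ t IH =>
    intro v hlen
    have hg : goodS (AA.run M t v) := by
      by_contra hg
      rw [run_succ, if_neg hg] at hlen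
      have := run_length_le (M := M) v t
      omega
    rw [run_succ, if_pos hg] at hlen ⊢
    have hql : (AA.run M t v).length = t + 1 := by
      simp only [List.length_append, List.length_singleton] at hlen
      omega
    have hpure : AA.run M t v = pureS M v t := by
      rcases IH v hql with h | h
      · exact h
      · exact absurd hg (not_goodS_of_last_univ h)
    rw [hpure]
    set q := pureS M v t with hqdef
    have hqlen : q.length = t + 1 := pureS_length v t
    by_cases hstale : ∃ s ∈ MSet M v t, relMsg q s ∧ s.length ≠ q.length
    · right
      rw [newE, if_pos hstale, lastE_append]
    · by_cases huniv : ∃ s ∈ MSet M v t, relMsg q s ∧ lastE s = Set.univ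
      · right
        have hnew : newE (MSet M v t) q = Set.univ := by
          rw [newE, if_neg hstale]
          apply Set.eq_univ_of_univ_subset
          obtain ⟨s, hsMS, hrel, hlast⟩ := huniv
          have hsub : lastE s ⊆ ⋃ s' ∈ {s' ∈ MSet M v t | relMsg q s'}, lastE s' :=
            Set.subset_biUnion_of_mem (show s ∈ {s' ∈ MSet M v t | relMsg q s'} from ⟨hsMS, hrel⟩)
          rw [hlast] at hsub
          exact hsub
        rw [hnew, lastE_append]
      · left
        have hq0 : q.getD 0 ∅ = {lab M v} := pureS_getD_zero v t
        have hMS : ∀ s, (s ∈ MSet M v t ∧ relMsg q s) ↔ ∃ u ∈ nbrS M v, s = AA.run M t u := by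
          intro s
          constructor
          · rintro ⟨hsMS, hrel⟩
            obtain ⟨u, hru, rfl⟩ := hsMS
            obtain ⟨a, ha, b, hb, hlab⟩ := hrel
            rw [hq0, Set.mem_singleton_iff] at ha
            rw [run_head, Set.mem_singleton_iff] at hb
            subst ha; subst hb
            exact ⟨u, ⟨hru, hlab⟩, rfl⟩
          · rintro ⟨u, ⟨hru, hlab⟩, rfl⟩
            refine ⟨⟨u, hru, rfl⟩, ?_⟩
            exact ⟨lab M v, by rw [hq0]; rfl, lab M u, by rw [run_head]; rfl, hlab⟩
        have hpure_u : ∀ u ∈ nbrS M v, AA.run M t u = pureS M u t := by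
          intro u hu
          have hsMS : AA.run M t u ∈ MSet M v t ∧ relMsg q (AA.run M t u) :=
            (hMS (AA.run M t u)).mpr ⟨u, hu, rfl⟩
          have hlenu : (AA.run M t u).length = q.length := by
            by_contra hne
            exact hstale ⟨AA.run M t u, hsMS.1, hsMS.2, hne⟩
          rw [hqlen] at hlenu
          rcases IH u hlenu with h | h
          · exact h
          · exact absurd ⟨AA.run M t u, hsMS.1, hsMS.2, h⟩ huniv
        have hlast_u : ∀ u ∈ nbrS M v, lastE (AA.run M t u) = lab M '' SW M u t := by
          intro u hu
          rw [hpure_u u hu]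
          unfold lastE
          rw [pureS_length]
          simp only [Nat.add_sub_cancel]
          exact pureS_getD (by omega)
        have hnew : newE (MSet M v t) q = lab M '' SW M v (t+1) := by
          rw [newE, if_neg hstale, SW_succ_union, Set.image_iUnion₂]
          ext x
          rw [Set.mem_iUnion₂, Set.mem_iUnion₂]
          constructor
          · rintro ⟨s, hs, hx⟩
            obtain ⟨u, hu, rfl⟩ := (hMS s).mp hs
            rw [hlast_u u hu] at hx
            exact ⟨u, hu, hx⟩
          · rintro ⟨u, hu, hx⟩
            refine ⟨AA.run M t u, ?_, ?_⟩
            · exact (hMS _).mpr ⟨u, hu, rfl⟩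
            · rw [hlast_u u hu]; exact hx
        rw [hnew, ← pureS_succ]


lemma good_forever_absurd (hW : Finite W) (w : W)
    (hgood : ∀ t, goodS (AA.run M t w)) : False := by
  have hrun : ∀ t, AA.run M t w = pureS M w t := by
    intro t
    have hlen : (AA.run M t w).length = t + 1 :=
      run_len_of_NF (fun t' _ => hgood t')
    rcases run_pure_or_univ t w hlen with h | h
    · exact h
    · exact absurd (hgood t) (not_goodS_of_last_univ h)
  have hanchor : ∀ t, ∃ s, ∀ m < t + 1, lab M '' SW M w m = {F (s + m)} := by
    intro t
    have := hgood t
    rw [hrun t] at this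
    obtain ⟨s, hs⟩ := this
    refine ⟨s, fun m hm => ?_⟩
    have := hs m (by rw [pureS_length]; omega)
    rw [pureS_getD hm] at this
    exact this
  have : ¬ Function.Injective (SW M w) := by
    intro hinj
    have : Finite (Set W) := inferInstance
    exact (Finite.of_injective _ hinj).false
  obtain ⟨i, j, hne, heq⟩ : ∃ i j, i ≠ j ∧ SW M w i = SW M w j := by
    by_contra h
    push_neg at h
    exact this (fun a b hab => by_contra fun hne => (h a b hne) hab)
  wlog hij : i < j generalizing i j
  · exact this j i hne.symm heq.symm (by omega)
  set p := j - i with hp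
  have hppos : 0 < p := by omega
  have haux : ∀ k, SW M w (j + k) = SW M w (i + k) := by
    intro k
    induction k with
    | zero => simpa using heq.symm
    | succ k ih =>
      have e1 : j + (k+1) = (j + k) + 1 := rfl
      have e2 : i + (k+1) = (i + k) + 1 := rfl
      rw [e1, e2]
      show stepS M (SW M w (j+k)) = stepS M (SW M w (i+k))
      rw [ih]
  obtain ⟨s, hs⟩ := hanchor (i + 2 * p)
  refine tm_no_overlap p hppos (s + i) (fun m hm => ?_)
  have e1 := hs (i + m) (by omega)
  have e2 := hs (i + m + p) (by omega)
  have e3 : SW M w (i + m + p) = SW M w (i + m) := by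
    have e : i + m + p = j + m := by omega
    rw [e, haux m]
  rw [e3, e1] at e2
  have hF : F (s + (i + m)) = F (s + (i + m + p)) :=
    (Set.singleton_eq_singleton_iff.mp e2)
  have htm := F_eq_tm hF
  have a1 : s + (i + m) = s + i + m := by ring
  have a2 : s + (i + m + p) = s + i + m + p := by ring
  rw [a1, a2] at htm
  exact htm

theorem AA_haltsOn [Finite W] (w : W) : AA.haltsOn M w := by
  constructor
  · have hfire : ∃ t, ¬ goodS (AA.run M t w) := by
      by_contra h
      push_neg at h
      exact good_forever_absurd ‹Finite W› w h
    classical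
    set t0 := Nat.find hfire with ht0
    have h0 : ¬ goodS (AA.run M t0 w) := Nat.find_spec hfire
    have hmin : ∀ m < t0, goodS (AA.run M m w) := by
      intro m hm
      by_contra hbad
      have : t0 ≤ m := ht0 ▸ Nat.find_le hbad
      omega
    by_cases hpar : Even ((AA.run M t0 w).length - 1)
    · left
      exact ⟨t0, ⟨h0, hpar⟩, fun m hm hmem => hmem.1 (hmin m hm)⟩
    · right
      exact ⟨t0, ⟨h0, hpar⟩, fun m hm hmem => hmem.1 (hmin m hm)⟩
  · intro n m hnm hmem
    have hng : ¬ goodS (AA.run M n w) := by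
      rcases hmem with h | h
      · exact h.1
      · exact h.1
    exact run_fix hng m hnm

-- ## Path models
def MP (N : ℕ) : KModel (Fin 5) Unit (Fin (N+1)) where
  val p i := p ∈ F i.val
  rel _ i j := i.val + 1 = j.val ∨ j.val + 1 = i.val

lemma lab_MP (N : ℕ) (i : Fin (N+1)) : lab (MP N) i = F i.val := rfl

def pstream (N j t : ℕ) : Strm :=
  (List.range (t+1)).map (fun m => if j + m ≤ N then ({F (j+m)} : Set Letter) else ∅)

lemma pstream_length (N j t : ℕ) : (pstream N j t).length = t + 1 := by simp [pstream]

lemma pstream_getD (N j t m : ℕ) (h : m < t + 1) :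
    (pstream N j t).getD m ∅ = if j + m ≤ N then ({F (j+m)} : Set Letter) else ∅ :=
  getD_range_map _ t m h

lemma pstream_succ (N j t : ℕ) :
    pstream N j (t+1) = pstream N j t ++
      [if j + (t+1) ≤ N then ({F (j+(t+1))} : Set Letter) else ∅] := by
  unfold pstream
  rw [List.range_succ]
  simp

lemma lastE_pstream (N k t : ℕ) : lastE (pstream N k t) =
    if k + t ≤ N then ({F (k+t)} : Set Letter) else ∅ := by
  unfold lastE
  rw [pstream_length]
  simp only [Nat.add_sub_cancel]
  exact pstream_getD N k t t (by omega)

lemma goodS_pstream {N j t : ℕ} (h : j + t ≤ N) : goodS (pstream N j t) := by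
  refine ⟨j, fun m hm => ?_⟩
  rw [pstream_length] at hm
  rw [pstream_getD N j t m hm, if_pos (by omega)]

lemma not_goodS_pstream {N j t : ℕ} (h : j + t = N + 1) : ¬ goodS (pstream N j t) := by
  rintro ⟨s, hs⟩
  have := hs t (by rw [pstream_length]; omega)
  rw [pstream_getD N j t t (by omega), if_neg (by omega)] at this
  exact singF_ne_empty _ this.symm

lemma fin3_ne_add_two : ∀ x : Fin 3, ¬ (x = x + 1 + 1) := by decide

lemma run_MP (N : ℕ) : ∀ t j, j ≤ N → t + j ≤ N + 1 →
    ∀ (hj' : j < N + 1), AA.run (MP N) t ⟨j, hj'⟩ = pstream N j t := by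
  intro t
  induction t with
  | zero =>
    intro j hj _ hj'
    rw [run_zero, lab_MP]
    unfold pstream
    rw [show List.range 1 = [0] from rfl]
    simp [hj]
  | succ t IH =>
    intro j hj h hj'
    have hIH : AA.run (MP N) t ⟨j, hj'⟩ = pstream N j t := IH j hj (by omega) hj'
    have hgood : goodS (AA.run (MP N) t ⟨j, hj'⟩) := by
      rw [hIH]; exact goodS_pstream (by omega)
    rw [run_succ, if_pos hgood, hIH]
    set q := pstream N j t with hq
    have hqlen : q.length = t + 1 := pstream_length N j t
    have hq0 : q.getD 0 ∅ = {F j} := by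
      rw [hq, pstream_getD N j t 0 (by omega), if_pos (by omega), Nat.add_zero]
    -- characterize messages
    have hMSmem : ∀ s, s ∈ MSet (MP N) ⟨j, hj'⟩ t ↔
        ∃ v : Fin (N+1), (j + 1 = v.val ∨ v.val + 1 = j) ∧ s = AA.run (MP N) t v := by
      intro s; exact Iff.rfl
    have hrel_of : ∀ k, k ≤ N → (relMsg q (pstream N k t) ↔ (k : Fin 3) = (j : Fin 3) + 1) := by
      intro k hk
      constructor
      · rintro ⟨a, ha, b, hb, hab⟩
        rw [hq0, Set.mem_singleton_iff] at ha
        rw [pstream_getD N k t 0 (by omega), if_pos (by omega), Nat.add_zero,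
          Set.mem_singleton_iff] at hb
        subst ha; subst hb
        rw [qlab_F, qlab_F] at hab
        exact hab
      · intro hk3
        refine ⟨F j, by rw [hq0]; rfl, F k,
          by rw [pstream_getD N k t 0 (by omega), if_pos (by omega), Nat.add_zero]; rfl, ?_⟩
        rw [qlab_F, qlab_F]
        exact hk3
    have hnext : (((j+1 : ℕ)) : Fin 3) = (j : Fin 3) + 1 := by push_cast; ring
    have hprev : ∀ hj1 : 1 ≤ j, ¬ ((((j-1 : ℕ)) : Fin 3) = (j : Fin 3) + 1) := by
      intro hj1 hcon
      have e : j = (j-1) + 1 := by omega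
      rw [e] at hcon
      push_cast at hcon
      exact fin3_ne_add_two _ (by rw [← hcon])
    -- the filtered message set
    have hfilter : {s ∈ MSet (MP N) ⟨j, hj'⟩ t | relMsg q s} =
        if j + 1 ≤ N then {pstream N (j+1) t} else ∅ := by
      ext s
      split
      · rename_i hjN
        simp only [Set.mem_setOf_eq, Set.mem_singleton_iff]
        constructor
        · rintro ⟨hsMS, hrel⟩
          obtain ⟨v, hv, rfl⟩ := (hMSmem _).mp hsMS
          rcases hv with hv | hv
          · have hveq : v = ⟨j+1, by omega⟩ := Fin.ext (by show v.val = j+1; omega)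
            rw [hveq]
            exact IH (j+1) (by omega) (by omega) (by omega)
          · have hj1 : 1 ≤ j := by omega
            have hveq : v = ⟨j-1, by omega⟩ := Fin.ext (by show v.val = j - 1; omega)
            rw [hveq, IH (j-1) (by omega) (by omega) (by omega)] at hrel
            exact absurd ((hrel_of (j-1) (by omega)).mp hrel) (hprev hj1)
        · rintro rfl
          refine ⟨(hMSmem _).mpr ⟨⟨j+1, by omega⟩, Or.inl rfl,
            (IH (j+1) (by omega) (by omega) (by omega)).symm⟩, ?_⟩
          exact (hrel_of (j+1) (by omega)).mpr hnext
      · rename_i hjN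
        simp only [Set.mem_setOf_eq, Set.mem_empty_iff_false, iff_false]
        rintro ⟨hsMS, hrel⟩
        obtain ⟨v, hv, rfl⟩ := (hMSmem _).mp hsMS
        rcases hv with hv | hv
        · have hvlt := v.isLt; omega
        · have hj1 : 1 ≤ j := by omega
          have hveq : v = ⟨j-1, by omega⟩ := Fin.ext (by show v.val = j - 1; omega)
          rw [hveq, IH (j-1) (by omega) (by omega) (by omega)] at hrel
          exact absurd ((hrel_of (j-1) (by omega)).mp hrel) (hprev hj1)
    have hnostale : ¬ ∃ s ∈ MSet (MP N) ⟨j, hj'⟩ t, relMsg q s ∧ s.length ≠ q.length := by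
      rintro ⟨s, hsMS, hrel, hlen⟩
      have : s ∈ {s ∈ MSet (MP N) ⟨j, hj'⟩ t | relMsg q s} := ⟨hsMS, hrel⟩
      rw [hfilter] at this
      split at this
      · rw [Set.mem_singleton_iff] at this
        subst this
        rw [pstream_length, hqlen] at hlen
        exact hlen rfl
      · exact this
    have hnew : newE (MSet (MP N) ⟨j, hj'⟩ t) q =
        if j + (t+1) ≤ N then ({F (j+(t+1))} : Set Letter) else ∅ := by
      rw [newE, if_neg hnostale, hfilter]
      by_cases hjN : j + 1 ≤ N
      · rw [if_pos hjN, Set.biUnion_singleton, lastE_pstream]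
        by_cases hc : j + (t+1) ≤ N
        · have h1 : (j+1) + t ≤ N := by omega
          have e : (j+1) + t = j + (t+1) := by omega
          rw [if_pos h1, if_pos hc, e]
        · have h1 : ¬ ((j+1) + t ≤ N) := by omega
          rw [if_neg h1, if_neg hc]
      · have h1 : ¬ (j + (t+1) ≤ N) := by omega
        rw [if_neg hjN, if_neg h1]
        simp
    rw [hnew, ← pstream_succ]


lemma MP_SB (N : ℕ) : IsSB (MP N) := by
  constructor
  · intro u v h
    rcases h with h | h
    · exact Or.inr h
    · exact Or.inl h
  · intro u h
    rcases h with h | h <;> omega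

lemma AA_accepts_MP (N : ℕ) :
    AA.accepts (MP N) ⟨0, by omega⟩ ↔ Even (N+1) := by
  have hrun : ∀ t, t ≤ N + 1 → AA.run (MP N) t ⟨0, by omega⟩ = pstream N 0 t :=
    fun t ht => run_MP N t 0 (by omega) (by omega) (by omega)
  have hgoodt : ∀ t, t ≤ N → goodS (AA.run (MP N) t ⟨0, by omega⟩) := by
    intro t ht
    rw [hrun t (by omega)]
    exact goodS_pstream (by omega)
  have hbad : ¬ goodS (AA.run (MP N) (N+1) ⟨0, by omega⟩) := by
    rw [hrun (N+1) (by omega)]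
    exact not_goodS_pstream (by omega)
  have hlen : (AA.run (MP N) (N+1) ⟨0, by omega⟩).length = N + 2 := by
    rw [hrun (N+1) (by omega), pstream_length]
  constructor
  · rintro ⟨m, hacc, _⟩
    rcases Nat.lt_or_ge m (N+1) with hm | hm
    · exact absurd (hgoodt m (by omega)) hacc.1
    · have := run_fix hbad m hm
      rw [this] at hacc
      have := hacc.2
      rw [hlen] at this
      simpa using this
  · intro heven
    refine ⟨N+1, ⟨hbad, ?_⟩, fun m hm hmem => hmem.1 (hgoodt m (by omega))⟩
    rw [hlen]
    simpa using heven

lemma localRun {Q' Msg' : Type} (B : MPA (Fin 5) Unit Q' Msg') (n : ℕ) :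
    ∀ m i, m + i ≤ n → ∀ (h1 : i < n + 1) (h2 : i < n + 2),
      B.run (MP n) m ⟨i, h1⟩ = B.run (MP (n+1)) m ⟨i, h2⟩ := by
  intro m
  induction m with
  | zero =>
    intro i hi h1 h2
    show B.init _ = B.init _
    rfl
  | succ m IH =>
    intro i hi h1 h2
    show B.trans _ _ = B.trans _ _
    congr 1
    · funext r
      ext msg
      simp only [Set.mem_setOf_eq]
      constructor
      · rintro ⟨v, hv, rfl⟩
        have hv' : i + 1 = v.val ∨ v.val + 1 = i := hv
        have hvlt : v.val < n + 1 := v.isLt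
        refine ⟨⟨v.val, by omega⟩, ?_, ?_⟩
        · rcases hv' with hv' | hv'
          · exact Or.inl hv'
          · exact Or.inr hv'
        · exact congrArg (fun q => B.msgf q r)
            (IH v.val (by omega) v.isLt (by omega))
      · rintro ⟨v, hv, rfl⟩
        have hv' : i + 1 = v.val ∨ v.val + 1 = i := hv
        have hvlt : v.val ≤ n := by rcases hv' with hv' | hv' <;> omega
        refine ⟨⟨v.val, by omega⟩, ?_, ?_⟩
        · rcases hv' with hv' | hv'
          · exact Or.inl hv'
          · exact Or.inr hv'
        · exact congrArg (fun q => B.msgf q r)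
            (IH v.val (by omega) (by omega) v.isLt).symm
    · exact IH i (by omega) h1 h2

lemma accepts_transfer {Q' Msg' W1 W2 : Type} (B : MPA (Fin 5) Unit Q' Msg')
    (M1 : KModel (Fin 5) Unit W1) (M2 : KModel (Fin 5) Unit W2)
    (w1 : W1) (w2 : W2) (n : ℕ)
    (heq : ∀ m ≤ n, B.run M1 m w1 = B.run M2 m w2)
    (hdec2 : ∃ m ≤ n, B.acceptsAt M2 w2 m ∨ B.rejectsAt M2 w2 m)
    (hacc : B.accepts M1 w1) : B.accepts M2 w2 := by
  obtain ⟨k, hk⟩ := hacc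
  obtain ⟨m, hm, hd⟩ := hdec2
  rcases hd with hd | hd
  · exact ⟨m, hd⟩
  · have hrej1 : B.rejectsAt M1 w1 m := by
      refine ⟨?_, fun l hl => ?_⟩
      · rw [heq m hm]; exact hd.1
      · rw [heq l (by omega)]; exact hd.2 l hl
    rcases lt_trichotomy k m with h | h | h
    · exact absurd hk.1 (hrej1.2 k h)
    · subst h
      refine ⟨k, ?_, fun l hl => ?_⟩
      · rw [← heq k hm]; exact hk.1
      · rw [← heq l (by omega)]; exact hk.2 l hl
    · exact absurd hrej1.1 (hk.2 m h)


/-- there is an automaton on finite SB(Π)-models that halts on every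
finite pointed SB(Π)-model but is strongly nonlocal: no automaton specifying a local
algorithm (accepting or rejecting every finite pointed SB(Π)-model within a fixed
number n of rounds) accepts exactly the same finite pointed SB(Π)-models. -/
theorem stmt_15 :
    ∃ (Q Msg : Type) (A : MPA (Fin 5) Unit Q Msg),
      (∀ (W : Type), Finite W → ∀ (M : KModel (Fin 5) Unit W), IsSB M →
        ∀ w : W, A.haltsOn M w) ∧
      ¬ ∃ (Q' Msg' : Type) (B : MPA (Fin 5) Unit Q' Msg') (n : ℕ),
          (∀ (W : Type), Finite W → ∀ (M : KModel (Fin 5) Unit W), IsSB M → ∀ w : W,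
            ∃ m ≤ n, B.acceptsAt M w m ∨ B.rejectsAt M w m) ∧
          (∀ (W : Type), Finite W → ∀ (M : KModel (Fin 5) Unit W), IsSB M → ∀ w : W,
            (A.accepts M w ↔ B.accepts M w)) := by
  refine ⟨Strm, Strm, AA, ?_, ?_⟩
  · intro W hW M _ w
    haveI := hW
    exact AA_haltsOn w
  · rintro ⟨Q', Msg', B, n, hdec, hagree⟩
    set w1 : Fin (n+1) := ⟨0, by omega⟩ with hw1
    set w2 : Fin (n+1+1) := ⟨0, by omega⟩ with hw2
    have hA1 : AA.accepts (MP n) w1 ↔ Even (n+1) := AA_accepts_MP n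
    have hA2 : AA.accepts (MP (n+1)) w2 ↔ Even (n+2) := AA_accepts_MP (n+1)
    have heq : ∀ m ≤ n, B.run (MP n) m w1 = B.run (MP (n+1)) m w2 :=
      fun m hm => localRun B n m 0 (by omega) (by omega) (by omega)
    have hdec1 := hdec (Fin (n+1)) inferInstance (MP n) (MP_SB n) w1
    have hdec2 := hdec (Fin (n+2)) inferInstance (MP (n+1)) (MP_SB (n+1)) w2
    have hB : B.accepts (MP n) w1 ↔ B.accepts (MP (n+1)) w2 :=
      ⟨accepts_transfer B _ _ _ _ n heq hdec2,
       accepts_transfer B _ _ _ _ n (fun m hm => (heq m hm).symm) hdec1⟩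
    have e1 := hagree (Fin (n+1)) inferInstance (MP n) (MP_SB n) w1
    have e2 := hagree (Fin (n+2)) inferInstance (MP (n+1)) (MP_SB (n+1)) w2
    have hparity : Even (n+1) ↔ Even (n+2) := by
      rw [← hA1, ← hA2, e1, e2, hB]
    rcases Nat.even_or_odd (n+1) with h | h
    · obtain ⟨a, ha⟩ := h
      obtain ⟨b, hb⟩ := hparity.mp ⟨a, ha⟩
      omega
    · obtain ⟨a, ha⟩ := h
      have h2 : Even (n+2) := ⟨a+1, by omega⟩
      obtain ⟨b, hb⟩ := hparity.mpr h2
      omega
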